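/- In a finite deterministic MDP with discount factor 0 ≤ γ < 1, stationary deterministic policies are sufficient for optimality: for every state s, the optimal value over all action streams equals the maximum over stationary deterministic policies, i.e., V* s = ⨆ π : S → A, V^π s. -/

import Mathlib

/-- In a finite deterministic MDP with `0 ≤ γ < 1`, stationary deterministic policies
are sufficient for optimality: `V* s = ⨆ π : S → A, V^π s`. -/
theorem stationary_policies_sufficient
    {S A : Type*} [Fintype S] [Fintype A] [Nonempty S] [Nonempty A]
    (step : S → A → S) (r : S → A → ℝ) (γ : ℝ) (hγ0 : 0 ≤ γ) (hγ1 : γ < 1)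
    (traj : S → (ℕ → A) → ℕ → S)
    (htraj0 : ∀ s u, traj s u 0 = s)
    (htrajS : ∀ s u t, traj s u (t + 1) = step (traj s u t) (u t))
    (G : S → (ℕ → A) → ℝ)
    (hG : ∀ s u, G s u = ∑' t : ℕ, γ ^ t * r (traj s u t) (u t))
    (Vstar : S → ℝ)
    (hVstar : ∀ s : S, Vstar s = ⨆ u : ℕ → A, G s u)
    (V : (S → A) → S → ℝ)
    (hV : ∀ (π : S → A) (s : S),
      V π s = ∑' t : ℕ, γ ^ t *
        r ((fun x => step x (π x))^[t] s) (π ((fun x => step x (π x))^[t] s))) :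
    ∀ s : S, Vstar s = ⨆ π : S → A, V π s := by
  classical
  obtain ⟨p0⟩ : Nonempty (S × A) := inferInstance
  set C : ℝ := Finset.univ.sup' Finset.univ_nonempty (fun p : S × A => |r p.1 p.2|) with hCdef
  have hC : ∀ s a, |r s a| ≤ C := fun s a =>
    Finset.le_sup' (f := fun p : S × A => |r p.1 p.2|) (Finset.mem_univ (s, a))
  have hC0 : 0 ≤ C := le_trans (abs_nonneg _) (hC p0.1 p0.2)
  have h1γ : (0:ℝ) < 1 - γ := by linarith
  set M : ℝ := C / (1 - γ) with hMdef
  -- summability of any such series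
  have hsum : ∀ (f : ℕ → S) (g : ℕ → A), Summable (fun t => γ ^ t * r (f t) (g t)) := by
    intro f g
    apply Summable.of_norm_bounded (g := fun t => C * γ ^ t)
      ((summable_geometric_of_lt_one hγ0 hγ1).mul_left C)
    intro t
    rw [Real.norm_eq_abs, abs_mul, abs_pow, abs_of_nonneg hγ0]
    calc γ ^ t * |r (f t) (g t)| ≤ γ ^ t * C :=
          mul_le_mul_of_nonneg_left (hC _ _) (pow_nonneg hγ0 t)
      _ = C * γ ^ t := mul_comm _ _
  -- uniform bound on such series
  have htsum_bound : ∀ (f : ℕ → S) (g : ℕ → A), |∑' t, γ ^ t * r (f t) (g t)| ≤ M := by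
    intro f g
    have habs : Summable (fun t => ‖γ ^ t * r (f t) (g t)‖) := by
      simp only [Real.norm_eq_abs]; exact (hsum f g).abs
    have h1 : |∑' t, γ ^ t * r (f t) (g t)| ≤ ∑' t, |γ ^ t * r (f t) (g t)| := by
      have := norm_tsum_le_tsum_norm habs
      simp only [Real.norm_eq_abs] at this
      exact this
    have h2 : ∑' t, |γ ^ t * r (f t) (g t)| ≤ ∑' t : ℕ, C * γ ^ t := by
      apply Summable.tsum_le_tsum _ ((hsum f g).abs)
        ((summable_geometric_of_lt_one hγ0 hγ1).mul_left C)
      intro t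
      rw [abs_mul, abs_pow, abs_of_nonneg hγ0]
      calc γ ^ t * |r (f t) (g t)| ≤ γ ^ t * C :=
            mul_le_mul_of_nonneg_left (hC _ _) (pow_nonneg hγ0 t)
        _ = C * γ ^ t := mul_comm _ _
    have h3 : ∑' t : ℕ, C * γ ^ t = M := by
      rw [tsum_mul_left, tsum_geometric_of_lt_one hγ0 hγ1, hMdef, div_eq_mul_inv]
    linarith
  have hGb : ∀ s u, |G s u| ≤ M := by
    intro s u; rw [hG]; exact htsum_bound (traj s u) u
  have hbdd : ∀ s, BddAbove (Set.range (G s)) := by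
    intro s
    exact ⟨M, by rintro x ⟨u, rfl⟩; exact (abs_le.1 (hGb s u)).2⟩
  have hGle : ∀ s u, G s u ≤ Vstar s := by
    intro s u; rw [hVstar]; exact le_ciSup (hbdd s) u
  have hVb : ∀ s, |Vstar s| ≤ M := by
    intro s
    rw [abs_le]
    constructor
    · exact le_trans ((abs_le.1 (hGb s (Classical.arbitrary _))).1)
        (hGle s (Classical.arbitrary _))
    · rw [hVstar]; exact ciSup_le fun u => (abs_le.1 (hGb s u)).2
  -- shift lemma
  have hshift : ∀ s u, G s u = r s (u 0) + γ * G (step s (u 0)) (fun t => u (t + 1)) := by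
    intro s u
    have htr : ∀ t, traj s u (t + 1) = traj (step s (u 0)) (fun n => u (n + 1)) t := by
      intro t
      induction t with
      | zero => rw [htrajS, htraj0, htraj0]
      | succ n ih => rw [htrajS, ih, htrajS]
    rw [hG, hG, Summable.tsum_eq_zero_add (hsum (traj s u) u)]
    congr 1
    · rw [htraj0, pow_zero, one_mul]
    · rw [← tsum_mul_left]
      congr 1
      funext n
      rw [htr n]
      ring
  -- Bellman inequality 1: actions give lower bounds
  have hBell_le : ∀ s a, r s a + γ * Vstar (step s a) ≤ Vstar s := by
    intro s a
    have key : ∀ u : ℕ → A, r s a + γ * G (step s a) u ≤ Vstar s := by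
      intro u
      have h := hshift s (fun t => Nat.casesOn t a u)
      have h' : G s (fun t => Nat.casesOn t a u) = r s a + γ * G (step s a) u := h
      rw [← h']
      exact hGle s _
    rcases eq_or_lt_of_le hγ0 with hz | hpos
    · have := key (Classical.arbitrary _)
      rw [← hz] at *
      simpa using this
    · have h2 : Vstar (step s a) ≤ (Vstar s - r s a) / γ := by
        rw [hVstar]
        apply ciSup_le
        intro u
        rw [le_div_iff₀ hpos, mul_comm]
        linarith [key u]
      have := mul_le_mul_of_nonneg_left h2 hγ0
      rw [mul_div_cancel₀ _ (ne_of_gt hpos)] at this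
      linarith
  -- Bellman inequality 2
  have hBell_ge : ∀ s u, G s u ≤ r s (u 0) + γ * Vstar (step s (u 0)) := by
    intro s u
    rw [hshift s u]
    exact add_le_add le_rfl (mul_le_mul_of_nonneg_left (hGle _ _) hγ0)
  -- optimal greedy policy
  have hopt : ∀ s, ∃ a : A, ∀ b : A,
      r s b + γ * Vstar (step s b) ≤ r s a + γ * Vstar (step s a) := by
    intro s
    obtain ⟨a, -, ha⟩ := Finset.exists_max_image Finset.univ
      (fun a => r s a + γ * Vstar (step s a)) ⟨Classical.arbitrary A, Finset.mem_univ _⟩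
    exact ⟨a, fun b => ha b (Finset.mem_univ b)⟩
  choose π hπ using hopt
  have hfix : ∀ s, Vstar s = r s (π s) + γ * Vstar (step s (π s)) := by
    intro s
    apply le_antisymm
    · rw [hVstar]
      exact ciSup_le fun u => (hBell_ge s u).trans (hπ s (u 0))
    · exact hBell_le s (π s)
  intro s
  set x : ℕ → S := fun t => (fun y => step y (π y))^[t] s with hxdef
  have hx0 : x 0 = s := rfl
  have hx : ∀ t, x (t + 1) = step (x t) (π (x t)) := by
    intro t
    exact Function.iterate_succ_apply' (fun y => step y (π y)) t s
  have hpartial : ∀ n, Vstar s =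
      (∑ t ∈ Finset.range n, γ ^ t * r (x t) (π (x t))) + γ ^ n * Vstar (x n) := by
    intro n
    induction n with
    | zero => simp [hx0]
    | succ n ih =>
      calc Vstar s = (∑ t ∈ Finset.range n, γ ^ t * r (x t) (π (x t)))
            + γ ^ n * Vstar (x n) := ih
        _ = (∑ t ∈ Finset.range n, γ ^ t * r (x t) (π (x t)))
            + γ ^ n * (r (x n) (π (x n)) + γ * Vstar (x (n + 1))) := by
              rw [hfix (x n), ← hx n]
        _ = (∑ t ∈ Finset.range (n + 1), γ ^ t * r (x t) (π (x t)))
            + γ ^ (n + 1) * Vstar (x (n + 1)) := by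
              rw [Finset.sum_range_succ]; ring
  have hVπ : V π s = ∑' t, γ ^ t * r (x t) (π (x t)) := hV π s
  have h1 : Filter.Tendsto (fun n => ∑ t ∈ Finset.range n, γ ^ t * r (x t) (π (x t)))
      Filter.atTop (nhds (∑' t, γ ^ t * r (x t) (π (x t)))) :=
    (hsum x (fun t => π (x t))).hasSum.tendsto_sum_nat
  have h2 : Filter.Tendsto (fun n => γ ^ n * Vstar (x n)) Filter.atTop (nhds 0) := by
    refine squeeze_zero_norm (a := fun n => M * γ ^ n) (fun n => ?_) ?_
    · 
      rw [Real.norm_eq_abs, abs_mul, abs_pow, abs_of_nonneg hγ0]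
      calc γ ^ n * |Vstar (x n)| ≤ γ ^ n * M :=
            mul_le_mul_of_nonneg_left (hVb (x n)) (pow_nonneg hγ0 n)
        _ = M * γ ^ n := mul_comm _ _
    · simpa using (tendsto_pow_atTop_nhds_zero_of_lt_one hγ0 hγ1).const_mul M
  have h3 : Filter.Tendsto (fun n => ∑ t ∈ Finset.range n, γ ^ t * r (x t) (π (x t)))
      Filter.atTop (nhds (Vstar s)) := by
    have : (fun n => ∑ t ∈ Finset.range n, γ ^ t * r (x t) (π (x t)))
        = fun n => Vstar s - γ ^ n * Vstar (x n) := by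
      funext n
      have := hpartial n
      linarith
    rw [this]
    simpa using tendsto_const_nhds.sub h2
  have hVπeq : Vstar s = V π s := by
    rw [hVπ]
    exact tendsto_nhds_unique h3 h1
  -- each policy value is a return, hence ≤ Vstar
  have hle1 : ∀ ρ : S → A, V ρ s ≤ Vstar s := by
    intro ρ
    set y : ℕ → S := fun t => (fun z => step z (ρ z))^[t] s with hydef
    have trajeq : ∀ t, traj s (fun n => ρ (y n)) t = y t := by
      intro t
      induction t with
      | zero => rw [htraj0]; rfl
      | succ n ih =>
        rw [htrajS, ih]
        exact (Function.iterate_succ_apply' (fun z => step z (ρ z)) n s).symm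
    have hVρ : V ρ s = G s (fun n => ρ (y n)) := by
      rw [hV, hG]
      congr 1
      funext t
      rw [trajeq t]
    rw [hVρ]
    exact hGle s _
  have hbddπ : BddAbove (Set.range (fun ρ : S → A => V ρ s)) :=
    Set.Finite.bddAbove (Set.finite_range _)
  apply le_antisymm
  · rw [hVπeq]
    exact le_ciSup hbddπ π
  · exact ciSup_le fun ρ => hle1 ρ
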